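/- Consider block variables x = (x₁,…,x_s), x_i ∈ ℝ^{n_i}, and y = (y₁,…,y_t), y_j ∈ ℝ^{m_j}, let F, G be differentiable on the respective product spaces, let H be a proper function of (x, y) with values in ℝ ∪ {+∞}, and set J(x, y) = F(x) + G(y) + H(x, y). Fix a current iterate z^k = (x^k, y^k) and suppose the next iterate z^{k+1} = (x^{k+1}, y^{k+1}) is produced cyclically: for each i = 1,…,s, x_i^{k+1} is a minimizer of x_i ↦ H(x^{k+1}_{<i}, x_i, x^k_{>i}, y^k) + ⟨x_i − x_i^k, ∇_{x_i}F(x^{k+1}_{<i}, x^k_{≥i})⟩ + (τ_i^k/2)‖x_i − x_i^k‖², and then for each j = 1,…,t, y_j^{k+1} is a minimizer of y_j ↦ H(x^{k+1}, y^{k+1}_{<j}, y_j, y^k_{>j}) + ⟨y_j − y_j^k, ∇_{y_j}G(y^{k+1}_{<j}, y^k_{≥j})⟩ + (σ_j^k/2)‖y_j − y_j^k‖². Assume that t ↦ ∇_{x_i}F(x^{k+1}_{<i}, t, x^k_{>i}) is Lipschitz with constant μ_i^k and that t ↦ ∇_{y_j}G(y^{k+1}_{<j}, t, y^k_{>j})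 is Lipschitz with constant ν_j^k, that μ_i^k ≥ μ̲_i > 0 and ν_j^k ≥ ν̲_j > 0, and that the stepsizes satisfy τ_i^k = γ_i μ_i^k with γ_i > 1 and σ_j^k = γ'_j ν_j^k with γ'_j > 1. Then J(z^{k+1}) ≤ J(z^k) − c‖z^{k+1} − z^k‖², where c = (1/2)·min{(γ_i − 1)μ̲_i, (γ'_j − 1)ν̲_j : i = 1,…,s, j = 1,…,t} > 0. -/

import Mathlib

open scoped RealInnerProductSpace

lemma descent_lemma {E : Type*} [NormedAddCommGroup E] [InnerProductSpace ℝ E]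
    [CompleteSpace E] (f : E → ℝ) (g : E → E) (L : ℝ)
    (hg : ∀ u, HasGradientAt f (g u) u)
    (hlip : ∀ u v, ‖g u - g v‖ ≤ L * ‖u - v‖) (a b : E) :
    f b ≤ f a + ⟪b - a, g a⟫ + L / 2 * ‖b - a‖ ^ 2 := by
  set d := b - a with hd
  set ψ : ℝ → ℝ := fun t => f (a + t • d) - t * ⟪d, g a⟫ - L / 2 * t ^ 2 * ‖d‖ ^ 2 with hψ
  have hline : ∀ t : ℝ, HasDerivAt (fun t : ℝ => a + t • d) d t := fun t => by
    simpa using ((hasDerivAt_id t).smul_const d).const_add a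
  have hψ' : ∀ t : ℝ, HasDerivAt ψ (⟪d, g (a + t • d)⟫ - ⟪d, g a⟫ - L * t * ‖d‖ ^ 2) t := by
    intro t
    have h1 : HasDerivAt (fun t : ℝ => f (a + t • d)) (⟪d, g (a + t • d)⟫) t := by
      have := (hg (a + t • d)).hasFDerivAt.comp_hasDerivAt t (hline t)
      simpa [real_inner_comm, Function.comp_def] using this
    have h2 : HasDerivAt (fun t : ℝ => t * ⟪d, g a⟫) (⟪d, g a⟫) t := by
      simpa using (hasDerivAt_id t).mul_const (⟪d, g a⟫)
    have h3 : HasDerivAt (fun t : ℝ => L / 2 * t ^ 2 * ‖d‖ ^ 2) (L * t * ‖d‖ ^ 2) t := by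
      have := ((hasDerivAt_pow 2 t).const_mul (L / 2)).mul_const (‖d‖ ^ 2)
      exact this.congr_deriv (by rw [show (2:ℕ) - 1 = 1 from rfl]; push_cast; ring)
    exact (h1.sub h2).sub h3
  have hmono : AntitoneOn ψ (Set.Icc 0 1) := by
    apply antitoneOn_of_deriv_nonpos (convex_Icc 0 1)
    · exact fun t _ => (hψ' t).continuousAt.continuousWithinAt
    · exact fun t _ => (hψ' t).differentiableAt.differentiableWithinAt
    · intro t ht
      rw [interior_Icc] at ht
      rw [(hψ' t).deriv]
      have h1 : ⟪d, g (a + t • d)⟫ - ⟪d, g a⟫ = ⟪d, g (a + t • d) - g a⟫ := by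
        rw [inner_sub_right]
      have h2 : ⟪d, g (a + t • d) - g a⟫ ≤ ‖d‖ * ‖g (a + t • d) - g a‖ :=
        real_inner_le_norm _ _
      have h3 : ‖g (a + t • d) - g a‖ ≤ L * (t * ‖d‖) := by
        have := hlip (a + t • d) a
        simpa [norm_smul, abs_of_pos ht.1] using this
      nlinarith [norm_nonneg d, ht.1.le]
  have := hmono (Set.left_mem_Icc.2 zero_le_one) (Set.right_mem_Icc.2 zero_le_one) zero_le_one
  simp only [hψ] at this
  have hb : a + (1 : ℝ) • d = b := by simp [hd]
  rw [hb] at this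
  simp only [zero_smul, add_zero, zero_mul, zero_pow, mul_zero, sub_zero, one_mul, one_pow] at this
  linarith

/-- Transfer an `EReal` inequality `a + r ≤ b + r'` (real scalars) to other scalars. -/
lemma ereal_shift (a b : EReal) {r r' : ℝ} (h : a + (r : EReal) ≤ b + (r' : EReal))
    (u u' : ℝ) (hu : u - r ≤ u' - r') : a + (u : EReal) ≤ b + (u' : EReal) := by
  have e1 : a + (u : EReal) = (a + (r : EReal)) + ((u - r : ℝ) : EReal) := by
    rw [add_assoc, ← EReal.coe_add]; norm_num
  have e2 : b + (u' : EReal) = (b + (r' : EReal)) + ((u' - r' : ℝ) : EReal) := by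
    rw [add_assoc, ← EReal.coe_add]; norm_num
  rw [e1, e2]
  exact add_le_add h (EReal.coe_le_coe_iff.2 hu)

/-- One cyclic sweep of proximal-linearized block updates decreases `Φ + F`. -/
lemma chain_aux {N : ℕ} (n : Fin (N + 1) → ℕ)
    (F : ((l : Fin (N + 1)) → EuclideanSpace ℝ (Fin (n l))) → ℝ)
    (Φ : ((l : Fin (N + 1)) → EuclideanSpace ℝ (Fin (n l))) → EReal)
    (xk xk1 : (l : Fin (N + 1)) → EuclideanSpace ℝ (Fin (n l)))
    (vx : (i : Fin (N + 1)) → (l : Fin (N + 1)) → EuclideanSpace ℝ (Fin (n l)))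
    (hvx : ∀ i l, vx i l = if l < i then xk1 l else xk l)
    (μ τ : Fin (N + 1) → ℝ)
    (gF : (i : Fin (N + 1)) → EuclideanSpace ℝ (Fin (n i)) → EuclideanSpace ℝ (Fin (n i)))
    (hgF : ∀ i u, HasGradientAt (fun v => F (Function.update (vx i) i v)) (gF i u) u)
    (hgFlip : ∀ i u v, ‖gF i u - gF i v‖ ≤ μ i * ‖u - v‖)
    (hmin : ∀ i, ∀ u, Φ (Function.update (vx i) i (xk1 i))
        + ((⟪xk1 i - xk i, gF i (xk i)⟫ + τ i / 2 * ‖xk1 i - xk i‖ ^ 2 : ℝ) : EReal)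
      ≤ Φ (Function.update (vx i) i u)
        + ((⟪u - xk i, gF i (xk i)⟫ + τ i / 2 * ‖u - xk i‖ ^ 2 : ℝ) : EReal)) :
    Φ xk1 + ((F xk1 + ∑ i, (τ i - μ i) / 2 * ‖xk1 i - xk i‖ ^ 2 : ℝ) : EReal)
      ≤ Φ xk + ((F xk : ℝ) : EReal) := by
  -- the point after `k` block updates
  set wx : ℕ → (l : Fin (N + 1)) → EuclideanSpace ℝ (Fin (n l)) :=
    fun k l => if (l : ℕ) < k then xk1 l else xk l with hwx
  set exn : ℕ → ℝ := fun k =>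
    if h : k < N + 1 then (τ ⟨k, h⟩ - μ ⟨k, h⟩) / 2 * ‖xk1 ⟨k, h⟩ - xk ⟨k, h⟩‖ ^ 2 else 0
    with hexn
  -- per-step inequality
  have step : ∀ i : Fin (N + 1),
      Φ (Function.update (vx i) i (xk1 i))
        + ((F (Function.update (vx i) i (xk1 i)) + (τ i - μ i) / 2 * ‖xk1 i - xk i‖ ^ 2 : ℝ)
            : EReal)
      ≤ Φ (vx i) + ((F (vx i) : ℝ) : EReal) := by
    intro i
    have hself : Function.update (vx i) i (xk i) = vx i := by
      have : vx i i = xk i := by rw [hvx]; simp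
      rw [← this, Function.update_eq_self]
    have hm := hmin i (xk i)
    rw [hself] at hm
    simp only [sub_self, inner_zero_left, norm_zero, zero_pow, mul_zero, add_zero,
      ne_eq, OfNat.ofNat_ne_zero, not_false_eq_true, EReal.coe_zero] at hm
    have hdesc := descent_lemma (fun v => F (Function.update (vx i) i v)) (gF i) (μ i)
      (hgF i) (hgFlip i) (xk i) (xk1 i)
    simp only [hself] at hdesc
    have hm' : Φ (Function.update (vx i) i (xk1 i))
        + ((⟪xk1 i - xk i, gF i (xk i)⟫ + τ i / 2 * ‖xk1 i - xk i‖ ^ 2 : ℝ) : EReal)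
        ≤ Φ (vx i) + ((0 : ℝ) : EReal) := by
      rw [EReal.coe_zero, add_zero]; exact hm
    exact ereal_shift _ _ hm'
      (F (Function.update (vx i) i (xk1 i)) + (τ i - μ i) / 2 * ‖xk1 i - xk i‖ ^ 2)
      (F (vx i)) (by linarith)
  -- telescoping
  have key : ∀ k, k ≤ N + 1 →
      Φ (wx k) + ((F (wx k) + ∑ i ∈ Finset.range k, exn i : ℝ) : EReal)
        ≤ Φ xk + ((F xk : ℝ) : EReal) := by
    intro k
    induction k with
    | zero =>
      intro _
      have : wx 0 = xk := by funext l; simp [hwx]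
      simp [this]
    | succ k ih =>
      intro hk1
      have hk : k < N + 1 := hk1
      set i : Fin (N + 1) := ⟨k, hk⟩ with hi
      have e1 : wx k = vx i := by
        funext l
        rw [hvx]
        simp [hwx, Fin.lt_def, hi]
      have e2 : wx (k + 1) = Function.update (vx i) i (xk1 i) := by
        funext l
        by_cases hl : l = i
        · subst hl; simp [hwx, hi]
        · rw [Function.update_of_ne hl, hvx]
          have hlk : (l : ℕ) ≠ k := fun h => hl (Fin.ext h)
          have : (l : ℕ) < k + 1 ↔ (l : ℕ) < k := by omega
          simp [hwx, Fin.lt_def, hi, this]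
      have e3 : exn k = (τ i - μ i) / 2 * ‖xk1 i - xk i‖ ^ 2 := by
        simp only [hexn]; exact dif_pos hk
      have hs := step i
      rw [← e2, ← e1, ← e3] at hs
      refine le_trans (ereal_shift _ _ hs
        (F (wx (k + 1)) + ∑ i ∈ Finset.range (k + 1), exn i)
        (F (wx k) + ∑ i ∈ Finset.range k, exn i) ?_) (ih (le_of_lt hk1))
      rw [Finset.sum_range_succ]; ring_nf; exact le_refl _
  have hfin := key (N + 1) le_rfl
  have e4 : wx (N + 1) = xk1 := by
    funext l; simp [hwx, l.isLt]
  have e5 : ∑ i ∈ Finset.range (N + 1), exn i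
      = ∑ i : Fin (N + 1), (τ i - μ i) / 2 * ‖xk1 i - xk i‖ ^ 2 := by
    rw [Finset.sum_range fun k => exn k]
    refine Finset.sum_congr rfl fun i _ => ?_
    simp [hexn, Nat.lt_add_one_iff.mp i.isLt]
  rw [e4, e5] at hfin
  exact hfin

/-- One-iteration sufficient decrease of the eASAP algorithm: with
`J(x,y) = F x + G y + H x y`, cyclic blockwise proximal-linearized updates, blockwise
Lipschitz partial gradients and stepsizes `τ_i = γ_i μ_i` (`γ_i > 1`),
`σ_j = γ'_j ν_j` (`γ'_j > 1`), one has `J z^{k+1} ≤ J z^k − c ‖z^{k+1} − z^k‖²` with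
`c = ½ min{(γ_i−1)μ̲_i, (γ'_j−1)ν̲_j} > 0`.  Blocks are indexed by `Fin (s+1)` and
`Fin (t+1)` (so that there is at least one block of each type). -/
theorem stmt_5 {s t : ℕ} (n : Fin (s + 1) → ℕ) (m : Fin (t + 1) → ℕ)
    (F : ((l : Fin (s + 1)) → EuclideanSpace ℝ (Fin (n l))) → ℝ)
    (G : ((l : Fin (t + 1)) → EuclideanSpace ℝ (Fin (m l))) → ℝ)
    (H : ((l : Fin (s + 1)) → EuclideanSpace ℝ (Fin (n l))) →
         ((l : Fin (t + 1)) → EuclideanSpace ℝ (Fin (m l))) → EReal)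
    (hHproper : ∃ p q, H p q ≠ ⊤) (hHnobot : ∀ p q, H p q ≠ ⊥)
    -- current and next iterates
    (xk xk1 : (l : Fin (s + 1)) → EuclideanSpace ℝ (Fin (n l)))
    (yk yk1 : (l : Fin (t + 1)) → EuclideanSpace ℝ (Fin (m l)))
    -- intermediate points: prefix already updated, i-th and later blocks still old
    (vx : (i : Fin (s + 1)) → (l : Fin (s + 1)) → EuclideanSpace ℝ (Fin (n l)))
    (hvx : ∀ i l, vx i l = if l < i then xk1 l else xk l)
    (vy : (j : Fin (t + 1)) → (l : Fin (t + 1)) → EuclideanSpace ℝ (Fin (m l)))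
    (hvy : ∀ j l, vy j l = if l < j then yk1 l else yk l)
    -- Lipschitz moduli, lower bounds and stepsize factors
    (μ μlow γ τ : Fin (s + 1) → ℝ) (ν νlow γ' σ : Fin (t + 1) → ℝ)
    (hμlow : ∀ i, 0 < μlow i) (hμ : ∀ i, μlow i ≤ μ i)
    (hνlow : ∀ j, 0 < νlow j) (hν : ∀ j, νlow j ≤ ν j)
    (hγ : ∀ i, 1 < γ i) (hγ' : ∀ j, 1 < γ' j)
    (hτ : ∀ i, τ i = γ i * μ i) (hσ : ∀ j, σ j = γ' j * ν j)
    -- partial gradients of F and G and their blockwise Lipschitz continuity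
    (gF : (i : Fin (s + 1)) → EuclideanSpace ℝ (Fin (n i)) → EuclideanSpace ℝ (Fin (n i)))
    (gG : (j : Fin (t + 1)) → EuclideanSpace ℝ (Fin (m j)) → EuclideanSpace ℝ (Fin (m j)))
    (hgF : ∀ i u, HasGradientAt (fun v => F (Function.update (vx i) i v)) (gF i u) u)
    (hgFlip : ∀ i u v, ‖gF i u - gF i v‖ ≤ μ i * ‖u - v‖)
    (hgG : ∀ j u, HasGradientAt (fun v => G (Function.update (vy j) j v)) (gG j u) u)
    (hgGlip : ∀ j u v, ‖gG j u - gG j v‖ ≤ ν j * ‖u - v‖)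
    -- the cyclic blockwise minimization steps
    (hxmin : ∀ i, ∀ u, H (Function.update (vx i) i (xk1 i)) yk
        + ((⟪xk1 i - xk i, gF i (xk i)⟫ + τ i / 2 * ‖xk1 i - xk i‖ ^ 2 : ℝ) : EReal)
      ≤ H (Function.update (vx i) i u) yk
        + ((⟪u - xk i, gF i (xk i)⟫ + τ i / 2 * ‖u - xk i‖ ^ 2 : ℝ) : EReal))
    (hymin : ∀ j, ∀ u, H xk1 (Function.update (vy j) j (yk1 j))
        + ((⟪yk1 j - yk j, gG j (yk j)⟫ + σ j / 2 * ‖yk1 j - yk j‖ ^ 2 : ℝ) : EReal)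
      ≤ H xk1 (Function.update (vy j) j u)
        + ((⟪u - yk j, gG j (yk j)⟫ + σ j / 2 * ‖u - yk j‖ ^ 2 : ℝ) : EReal)) :
    0 < (1 / 2 : ℝ) * min (⨅ i, (γ i - 1) * μlow i) (⨅ j, (γ' j - 1) * νlow j)
    ∧ H xk1 yk1 + ((F xk1 + G yk1 : ℝ) : EReal)
      ≤ H xk yk + ((F xk + G yk : ℝ) : EReal)
        - (((1 / 2 : ℝ) * min (⨅ i, (γ i - 1) * μlow i) (⨅ j, (γ' j - 1) * νlow j)
            * (∑ i, ‖xk1 i - xk i‖ ^ 2 + ∑ j, ‖yk1 j - yk j‖ ^ 2) : ℝ) : EReal) := by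
  classical
  set c : ℝ := (1 / 2 : ℝ) * min (⨅ i, (γ i - 1) * μlow i) (⨅ j, (γ' j - 1) * νlow j) with hc
  have hbx : BddBelow (Set.range fun i => (γ i - 1) * μlow i) := Finite.bddBelow_range _
  have hby : BddBelow (Set.range fun j => (γ' j - 1) * νlow j) := Finite.bddBelow_range _
  have hcx : ∀ i, c ≤ (γ i - 1) * μlow i / 2 := by
    intro i
    have h1 : (⨅ i, (γ i - 1) * μlow i) ≤ (γ i - 1) * μlow i := ciInf_le hbx i
    have h2 : min (⨅ i, (γ i - 1) * μlow i) (⨅ j, (γ' j - 1) * νlow j)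
        ≤ (⨅ i, (γ i - 1) * μlow i) := min_le_left _ _
    rw [hc]; linarith
  have hcy : ∀ j, c ≤ (γ' j - 1) * νlow j / 2 := by
    intro j
    have h1 : (⨅ j, (γ' j - 1) * νlow j) ≤ (γ' j - 1) * νlow j := ciInf_le hby j
    have h2 : min (⨅ i, (γ i - 1) * μlow i) (⨅ j, (γ' j - 1) * νlow j)
        ≤ (⨅ j, (γ' j - 1) * νlow j) := min_le_right _ _
    rw [hc]; linarith
  have hcpos : 0 < c := by
    obtain ⟨i₀, hi₀⟩ := exists_eq_ciInf_of_finite (f := fun i => (γ i - 1) * μlow i)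
    obtain ⟨j₀, hj₀⟩ := exists_eq_ciInf_of_finite (f := fun j => (γ' j - 1) * νlow j)
    have h1 : 0 < (γ i₀ - 1) * μlow i₀ := mul_pos (by linarith [hγ i₀]) (hμlow i₀)
    have h2 : 0 < (γ' j₀ - 1) * νlow j₀ := mul_pos (by linarith [hγ' j₀]) (hνlow j₀)
    rw [hc]
    have := lt_min (hi₀ ▸ h1) (hj₀ ▸ h2)
    linarith
  refine ⟨hcpos, ?_⟩
  have chainX := chain_aux n F (fun p => H p yk) xk xk1 vx hvx μ τ gF hgF hgFlip hxmin
  have chainY := chain_aux m G (fun q => H xk1 q) yk yk1 vy hvy ν σ gG hgG hgGlip hymin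
  set Sx : ℝ := ∑ i, (τ i - μ i) / 2 * ‖xk1 i - xk i‖ ^ 2 with hSx
  set Sy : ℝ := ∑ j, (σ j - ν j) / 2 * ‖yk1 j - yk j‖ ^ 2 with hSy
  set Tx : ℝ := ∑ i, ‖xk1 i - xk i‖ ^ 2 with hTx
  set Ty : ℝ := ∑ j, ‖yk1 j - yk j‖ ^ 2 with hTy
  have hcTx : c * Tx ≤ Sx := by
    rw [hTx, hSx, Finset.mul_sum]
    refine Finset.sum_le_sum fun i _ => ?_
    have h1 : c ≤ (τ i - μ i) / 2 := by
      have := hcx i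
      have h2 : (γ i - 1) * μlow i ≤ (γ i - 1) * μ i :=
        mul_le_mul_of_nonneg_left (hμ i) (by linarith [hγ i])
      rw [hτ i]
      nlinarith
    exact mul_le_mul_of_nonneg_right h1 (by positivity)
  have hcTy : c * Ty ≤ Sy := by
    rw [hTy, hSy, Finset.mul_sum]
    refine Finset.sum_le_sum fun j _ => ?_
    have h1 : c ≤ (σ j - ν j) / 2 := by
      have := hcy j
      have h2 : (γ' j - 1) * νlow j ≤ (γ' j - 1) * ν j :=
        mul_le_mul_of_nonneg_left (hν j) (by linarith [hγ' j])
      rw [hσ j]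
      nlinarith
    exact mul_le_mul_of_nonneg_right h1 (by positivity)
  have step1 : H xk1 yk + ((F xk1 + Sx + G yk : ℝ) : EReal)
      ≤ H xk yk + ((F xk + G yk : ℝ) : EReal) :=
    ereal_shift _ _ chainX (F xk1 + Sx + G yk) (F xk + G yk) (by ring_nf; exact le_refl _)
  have step2 : H xk1 yk1 + ((F xk1 + G yk1 + Sx + Sy : ℝ) : EReal)
      ≤ H xk1 yk + ((F xk1 + Sx + G yk : ℝ) : EReal) :=
    ereal_shift _ _ chainY (F xk1 + G yk1 + Sx + Sy) (F xk1 + Sx + G yk)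
      (by ring_nf; exact le_refl _)
  have combined := step2.trans step1
  have final : H xk1 yk1 + ((F xk1 + G yk1 : ℝ) : EReal)
      ≤ H xk yk + ((F xk + G yk - c * (Tx + Ty) : ℝ) : EReal) :=
    ereal_shift _ _ combined (F xk1 + G yk1) (F xk + G yk - c * (Tx + Ty))
      (by nlinarith)
  have hrw : H xk yk + ((F xk + G yk : ℝ) : EReal) - ((c * (Tx + Ty) : ℝ) : EReal)
      = H xk yk + ((F xk + G yk - c * (Tx + Ty) : ℝ) : EReal) := by
    rw [sub_eq_add_neg, ← EReal.coe_neg, add_assoc, ← EReal.coe_add, ← sub_eq_add_neg]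
  rw [hrw]
  exact final
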